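/- For all positive integers m, n, every BQAP1 instance (q, c, d), and every feasible solution (σ,τ), there exist a : Fin n and b : Fin m with f1(σ_a, τ_b) ≥ A1(q,c,d), and there exist a' : Fin n and b' : Fin m with f1(σ_{a'}, τ_{b'}) ≤ A1(q,c,d), where σ_a(i) = σ(i) + a and τ_b(l) = τ(l) + b (addition in Fin n and Fin m, i.e. cyclic shifts modulo n and m). -/

import Mathlib

/-- Objective function of BQAP1. -/
noncomputable def f1 {m n : ℕ} (q : Fin m → Fin n → Fin m → Fin n → ℝ)
    (c d : Fin m → Fin n → ℝ) (σ : Fin m → Fin n) (τ : Fin n → Fin m) : ℝ :=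
  (∑ i, ∑ l, q i (σ i) (τ l) l) + (∑ i, c i (σ i)) + (∑ l, d (τ l) l)

/-- Average objective value of BQAP1. -/
noncomputable def A1 {m n : ℕ} (q : Fin m → Fin n → Fin m → Fin n → ℝ)
    (c d : Fin m → Fin n → ℝ) : ℝ :=
  (1 / ((m : ℝ) * n)) * (∑ i, ∑ j, ∑ k, ∑ l, q i j k l)
    + (1 / (n : ℝ)) * (∑ i, ∑ j, c i j)
    + (1 / (m : ℝ)) * (∑ i, ∑ j, d i j)

private lemma swapsum {ι κ : Type*} [Fintype ι] [Fintype κ] (f : ι → κ → ℝ) :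
    ∑ i, ∑ k, f i k = ∑ k, ∑ i, f i k := Finset.sum_comm

lemma sum_shifts_eq {m n : ℕ} (hm : 0 < m) (hn : 0 < n)
    (q : Fin m → Fin n → Fin m → Fin n → ℝ) (c d : Fin m → Fin n → ℝ)
    (σ : Fin m → Fin n) (τ : Fin n → Fin m) :
    ∑ p : Fin n × Fin m, f1 q c d (fun i => σ i + p.1) (fun l => τ l + p.2)
      = ((n : ℝ) * m) * A1 q c d := by
  haveI : NeZero m := ⟨hm.ne'⟩
  haveI : NeZero n := ⟨hn.ne'⟩
  have hq : ∀ (i : Fin m) (l : Fin n),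
      ∑ a : Fin n, ∑ b : Fin m, q i (σ i + a) (τ l + b) l = ∑ j, ∑ k, q i j k l := by
    intro i l
    calc ∑ a : Fin n, ∑ b : Fin m, q i (σ i + a) (τ l + b) l
        = ∑ a : Fin n, ∑ k, q i (σ i + a) k l := by
          refine Finset.sum_congr rfl fun a _ => ?_
          exact Equiv.sum_comp (Equiv.addLeft (τ l)) (fun k => q i (σ i + a) k l)
      _ = ∑ j, ∑ k, q i j k l :=
          Equiv.sum_comp (Equiv.addLeft (σ i)) (fun j => ∑ k, q i j k l)
  have hc : ∀ i : Fin m, ∑ a : Fin n, c i (σ i + a) = ∑ j, c i j := fun i =>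
    Equiv.sum_comp (Equiv.addLeft (σ i)) (fun j => c i j)
  have hd : ∀ l : Fin n, ∑ b : Fin m, d (τ l + b) l = ∑ k, d k l := fun l =>
    Equiv.sum_comp (Equiv.addLeft (τ l)) (fun k => d k l)
  have hQ : ∑ a : Fin n, ∑ b : Fin m,
      (∑ i, ∑ l, q i (σ i + a) (τ l + b) l) = ∑ i, ∑ j, ∑ k, ∑ l, q i j k l := by
    calc ∑ a : Fin n, ∑ b : Fin m, ∑ i, ∑ l, q i (σ i + a) (τ l + b) l
        = ∑ a : Fin n, ∑ i, ∑ b : Fin m, ∑ l, q i (σ i + a) (τ l + b) l :=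
          Finset.sum_congr rfl fun a _ => swapsum _
      _ = ∑ i, ∑ a : Fin n, ∑ b : Fin m, ∑ l, q i (σ i + a) (τ l + b) l := swapsum _
      _ = ∑ i, ∑ a : Fin n, ∑ l, ∑ b : Fin m, q i (σ i + a) (τ l + b) l :=
          Finset.sum_congr rfl fun i _ => Finset.sum_congr rfl fun a _ => swapsum _
      _ = ∑ i, ∑ l, ∑ a : Fin n, ∑ b : Fin m, q i (σ i + a) (τ l + b) l :=
          Finset.sum_congr rfl fun i _ => swapsum _
      _ = ∑ i, ∑ l, ∑ j, ∑ k, q i j k l := by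
          exact Finset.sum_congr rfl fun i _ => Finset.sum_congr rfl fun l _ => hq i l
      _ = ∑ i, ∑ j, ∑ l, ∑ k, q i j k l := Finset.sum_congr rfl fun i _ => swapsum _
      _ = ∑ i, ∑ j, ∑ k, ∑ l, q i j k l :=
          Finset.sum_congr rfl fun i _ => Finset.sum_congr rfl fun j _ => swapsum _
  have hC : ∑ a : Fin n, ∑ _b : Fin m, (∑ i, c i (σ i + a))
      = (m : ℝ) * ∑ i, ∑ j, c i j := by
    simp_rw [Finset.sum_const, Finset.card_univ, Fintype.card_fin, nsmul_eq_mul]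
    rw [← Finset.mul_sum]
    congr 1
    calc ∑ a : Fin n, ∑ i, c i (σ i + a)
        = ∑ i, ∑ a : Fin n, c i (σ i + a) := swapsum _
      _ = ∑ i, ∑ j, c i j := Finset.sum_congr rfl fun i _ => hc i
  have hD : ∑ _a : Fin n, ∑ b : Fin m, (∑ l, d (τ l + b) l)
      = (n : ℝ) * ∑ i, ∑ j, d i j := by
    rw [Finset.sum_const, Finset.card_univ, Fintype.card_fin, nsmul_eq_mul]
    congr 1
    calc ∑ b : Fin m, ∑ l, d (τ l + b) l
        = ∑ l, ∑ b : Fin m, d (τ l + b) l := swapsum _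
      _ = ∑ l, ∑ k, d k l := Finset.sum_congr rfl fun l _ => hd l
      _ = ∑ i, ∑ j, d i j := swapsum _
  have expand : ∑ p : Fin n × Fin m, f1 q c d (fun i => σ i + p.1) (fun l => τ l + p.2)
      = (∑ a : Fin n, ∑ b : Fin m, (∑ i, ∑ l, q i (σ i + a) (τ l + b) l))
        + (∑ a : Fin n, ∑ _b : Fin m, (∑ i, c i (σ i + a)))
        + (∑ _a : Fin n, ∑ b : Fin m, (∑ l, d (τ l + b) l)) := by
    rw [Fintype.sum_prod_type]
    simp only [f1, Finset.sum_add_distrib]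
  rw [expand, hQ, hC, hD, A1]
  have hm' : (m : ℝ) ≠ 0 := Nat.cast_ne_zero.mpr hm.ne'
  have hn' : (n : ℝ) ≠ 0 := Nat.cast_ne_zero.mpr hn.ne'
  field_simp

theorem shifts_above_and_below_average_BQAP1 (m n : ℕ) (hm : 0 < m) (hn : 0 < n)
    (q : Fin m → Fin n → Fin m → Fin n → ℝ) (c d : Fin m → Fin n → ℝ)
    (σ : Fin m → Fin n) (τ : Fin n → Fin m) :
    (∃ (a : Fin n) (b : Fin m),
        f1 q c d (fun i => σ i + a) (fun l => τ l + b) ≥ A1 q c d) ∧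
    (∃ (a' : Fin n) (b' : Fin m),
        f1 q c d (fun i => σ i + a') (fun l => τ l + b') ≤ A1 q c d) := by
  haveI : NeZero m := ⟨hm.ne'⟩
  haveI : NeZero n := ⟨hn.ne'⟩
  have hkey := sum_shifts_eq hm hn q c d σ τ
  have hconst : ∑ _p : Fin n × Fin m, A1 q c d = ((n : ℝ) * m) * A1 q c d := by
    rw [Finset.sum_const, Finset.card_univ, Fintype.card_prod, Fintype.card_fin,
      Fintype.card_fin, nsmul_eq_mul, Nat.cast_mul]
  have hne : (Finset.univ : Finset (Fin n × Fin m)).Nonempty := Finset.univ_nonempty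
  constructor
  · obtain ⟨p, _, hp⟩ :=
      Finset.exists_le_of_sum_le hne (le_of_eq (hconst.trans hkey.symm))
    exact ⟨p.1, p.2, hp⟩
  · obtain ⟨p, _, hp⟩ :=
      Finset.exists_le_of_sum_le hne (le_of_eq (hkey.trans hconst.symm))
    exact ⟨p.1, p.2, hp⟩
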